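/- Let w_1, …, w_m ∈ ℝ^d, x ∈ ℝ^d, y ∈ {−1,1}^m and ε ≥ 0. Then the worst-case multi-label hinge loss under an ℓ₂-bounded input perturbation satisfies sup over r ∈ ℝ^d with ‖r‖₂ ≤ ε of ∑_{j=1}^m max(0, 1 − y_j ⟨w_j, x + r⟩) ≤ ∑_{j=1}^m max(0, 1 − y_j ⟨w_j, x⟩) + ε · max over b ∈ {0,1}^m of ‖∑_{j=1}^m b_j y_j w_j‖₂. -/

import Mathlib

open scoped RealInnerProductSpace BigOperators

/-- Per-instance adversarial hinge-loss bound: the worst-case multi-label hinge loss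
under an `ℓ₂`-bounded perturbation of the input is at most the clean hinge loss plus
`ε` times the transferability quantity `C_{W,z} = max_{b ∈ {0,1}^m} ‖∑ j, b j • (y j • w j)‖₂`. -/
theorem adversarial_hinge_loss_le_clean_add_transferability
    {d m : ℕ} (w : Fin m → EuclideanSpace ℝ (Fin d)) (x : EuclideanSpace ℝ (Fin d))
    (y : Fin m → ℝ) (hy : ∀ j, y j = 1 ∨ y j = -1) (ε : ℝ) (hε : 0 ≤ ε) :
    (⨆ r : {r : EuclideanSpace ℝ (Fin d) // ‖r‖ ≤ ε},
        ∑ j, max 0 (1 - y j * ⟪w j, x + (r : EuclideanSpace ℝ (Fin d))⟫)) ≤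
      (∑ j, max 0 (1 - y j * ⟪w j, x⟫)) +
        ε * ⨆ b : Fin m → Bool, ‖∑ j, if b j then y j • w j else 0‖ := by
  have hB : BddAbove (Set.range fun b : Fin m → Bool => ‖∑ j, if b j then y j • w j else 0‖) :=
    Set.Finite.bddAbove (Set.finite_range _)
  have hne : Nonempty {r : EuclideanSpace ℝ (Fin d) // ‖r‖ ≤ ε} :=
    ⟨⟨0, by simpa using hε⟩⟩
  apply ciSup_le
  rintro ⟨r, hr⟩
  have step1 : ∑ j, max 0 (1 - y j * ⟪w j, x + r⟫) ≤
      (∑ j, max 0 (1 - y j * ⟪w j, x⟫)) + ∑ j, max 0 (-(y j * ⟪w j, r⟫)) := by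
    rw [← Finset.sum_add_distrib]
    apply Finset.sum_le_sum
    intro j _
    have h1 : 1 - y j * ⟪w j, x + r⟫ = (1 - y j * ⟪w j, x⟫) + (-(y j * ⟪w j, r⟫)) := by
      rw [inner_add_right]; ring
    rw [h1]
    exact max_le (by positivity) (add_le_add (le_max_right _ _) (le_max_right _ _))
  refine step1.trans (add_le_add (le_refl _) ?_)
  set b : Fin m → Bool := fun j => decide (0 < -(y j * ⟪w j, r⟫)) with hb
  set S : EuclideanSpace ℝ (Fin d) := ∑ j, if b j then y j • w j else 0 with hS
  have key : ∑ j, max 0 (-(y j * ⟪w j, r⟫)) = -⟪S, r⟫ := by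
    rw [hS, sum_inner, ← Finset.sum_neg_distrib]
    apply Finset.sum_congr rfl
    intro j _
    by_cases h : (0:ℝ) < -(y j * ⟪w j, r⟫)
    · simp only [hb, decide_eq_true_eq, if_pos h, real_inner_smul_left,
        max_eq_right h.le]
    · simp only [hb, decide_eq_true_eq, if_neg h, max_eq_left (not_lt.mp h)]
      simp
  rw [key]
  have h2 : -⟪S, r⟫ ≤ ‖S‖ * ε := by
    calc -⟪S, r⟫ ≤ |⟪S, r⟫| := neg_le_abs _
    _ ≤ ‖S‖ * ‖r‖ := abs_real_inner_le_norm _ _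
    _ ≤ ‖S‖ * ε := by
        exact mul_le_mul_of_nonneg_left hr (norm_nonneg _)
  refine h2.trans ?_
  rw [mul_comm]
  exact mul_le_mul_of_nonneg_left (le_ciSup hB b) hε
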